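/- Let ψ and φ be pure states on ℂ^d. If Δ(ψ) majorizes Δ(φ), i.e., Δ(ψ) ≻ Δ(φ), then there exists a strictly incoherent operation T with T(|φ⟩⟨φ|) = |ψ⟩⟨ψ|. -/

import Mathlib

namespace Coherence

open Matrix
open scoped BigOperators ComplexOrder

variable {ι κ : Type*} [Fintype ι] [DecidableEq ι] [Fintype κ] [DecidableEq κ]

/-- A density matrix: positive semidefinite with unit trace. -/
def IsDensity (ρ : Matrix ι ι ℂ) : Prop := ρ.PosSemidef ∧ ρ.trace = 1

/-- The dephasing (decohering) map Δ in the fixed (incoherent) basis. -/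
def dephase (ρ : Matrix ι ι ℂ) : Matrix ι ι ℂ := Matrix.diagonal (fun i => ρ i i)

/-- The pure state |v⟩⟨v| associated with a vector `v`. -/
def pureState (v : ι → ℂ) : Matrix ι ι ℂ := Matrix.of fun i j => v i * star (v j)

/-- `v` is a unit vector. -/
def IsUnitVec (v : ι → ℂ) : Prop := ∑ i, ‖v i‖ ^ 2 = 1

/-- An incoherent Kraus operator: each column has at most one nonzero entry,
i.e. `K = ∑ i c(i) |j(i)⟩⟨i|` for a function `j` on basis indices. -/
def IncoherentKraus (K : Matrix κ ι ℂ) : Prop :=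
  ∀ i : ι, ∃ j : κ, ∀ j' : κ, K j' i ≠ 0 → j' = j

/-- A strictly incoherent Kraus operator: `K` and `K†` are both incoherent. -/
def StrictlyIncoherentKraus (K : Matrix κ ι ℂ) : Prop :=
  IncoherentKraus K ∧ IncoherentKraus Kᴴ

/-- An incoherent operation: a cptp map admitting a Kraus representation by
incoherent Kraus operators. -/
def IsIncoherentOp (T : Matrix ι ι ℂ → Matrix κ κ ℂ) : Prop :=
  ∃ (m : ℕ) (K : Fin m → Matrix κ ι ℂ),
    (∀ ℓ, IncoherentKraus (K ℓ)) ∧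
    (∑ ℓ, (K ℓ)ᴴ * K ℓ = 1) ∧
    (∀ ρ, T ρ = ∑ ℓ, K ℓ * ρ * (K ℓ)ᴴ)

/-- A strictly incoherent operation. -/
def IsStrictlyIncoherentOp (T : Matrix ι ι ℂ → Matrix κ κ ℂ) : Prop :=
  ∃ (m : ℕ) (K : Fin m → Matrix κ ι ℂ),
    (∀ ℓ, StrictlyIncoherentKraus (K ℓ)) ∧
    (∑ ℓ, (K ℓ)ᴴ * K ℓ = 1) ∧
    (∀ ρ, T ρ = ∑ ℓ, K ℓ * ρ * (K ℓ)ᴴ)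

/-- Functional calculus for Hermitian matrices (junk value `0` otherwise). -/
noncomputable def matFun (f : ℝ → ℝ) (A : Matrix ι ι ℂ) : Matrix ι ι ℂ :=
  if h : A.IsHermitian then
    (h.eigenvectorUnitary : Matrix ι ι ℂ) *
      Matrix.diagonal (fun i => (f (h.eigenvalues i) : ℂ)) *
      (star (h.eigenvectorUnitary : Matrix ι ι ℂ))
  else 0

/-- Von Neumann entropy `S(ρ) = −tr ρ log₂ ρ` (with the convention 0 log 0 = 0). -/
noncomputable def vN (ρ : Matrix ι ι ℂ) : ℝ :=
  if h : ρ.IsHermitian then -∑ i, h.eigenvalues i * Real.logb 2 (h.eigenvalues i) else 0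

noncomputable def matLog2 (A : Matrix ι ι ℂ) : Matrix ι ι ℂ := matFun (Real.logb 2) A

noncomputable def matSqrt (A : Matrix ι ι ℂ) : Matrix ι ι ℂ := matFun Real.sqrt A

/-- Quantum relative entropy `S(ρ‖σ) = tr ρ (log₂ ρ − log₂ σ)`. -/
noncomputable def relEnt (ρ σ : Matrix ι ι ℂ) : ℝ :=
  ((ρ * (matLog2 ρ - matLog2 σ)).trace).re

/-- Fidelity `F(ρ,σ) = tr √(√ρ σ √ρ)`. -/
noncomputable def fidelity (ρ σ : Matrix ι ι ℂ) : ℝ :=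
  ((matSqrt (matSqrt ρ * σ * matSqrt ρ)).trace).re

/-- Trace norm `‖A‖₁ = tr √(A†A)`. -/
noncomputable def traceNorm (A : Matrix ι ι ℂ) : ℝ :=
  ((matSqrt (Aᴴ * A)).trace).re

/-- Bures distance `B(ρ,σ) = √2 √(1 − F(ρ,σ))`. -/
noncomputable def bures (ρ σ : Matrix ι ι ℂ) : ℝ :=
  Real.sqrt 2 * Real.sqrt (1 - fidelity ρ σ)

/-- Binary entropy function. -/
noncomputable def binEnt (x : ℝ) : ℝ :=
  -(x * Real.logb 2 x) - (1 - x) * Real.logb 2 (1 - x)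

/-- The `n`-fold tensor (Kronecker) power of a matrix, with indices the product basis. -/
def tpow (ρ : Matrix ι ι ℂ) (n : ℕ) : Matrix (Fin n → ι) (Fin n → ι) ℂ :=
  Matrix.of fun i j => ∏ t, ρ (i t) (j t)

/-- The unit (qubit maximally coherent) state Φ₂. -/
noncomputable def Phi2 : Matrix (Fin 2) (Fin 2) ℂ := Matrix.of fun _ _ => (1 / 2 : ℂ)

/-- Relative entropy of coherence `C_r(ρ) = S(Δ(ρ)) − S(ρ)`. -/
noncomputable def Cr (ρ : Matrix ι ι ℂ) : ℝ := vN (dephase ρ) - vN ρ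

/-- Coherence of formation: the least average entropy of coherence over finite
pure-state decompositions of `ρ`. -/
noncomputable def Cf (ρ : Matrix ι ι ℂ) : ℝ :=
  sInf {x | ∃ (m : ℕ) (p : Fin m → ℝ) (v : Fin m → ι → ℂ),
    (∀ k, 0 ≤ p k) ∧ (∀ k, IsUnitVec (v k)) ∧
    ρ = ∑ k, (p k : ℂ) • pureState (v k) ∧
    x = ∑ k, p k * vN (dephase (pureState (v k)))}

/-- `R` is an achievable coherence-distillation rate for `ρ`. -/
def DistillRate {d : ℕ} (ρ : Matrix (Fin d) (Fin d) ℂ) (R : ℝ) : Prop :=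
  0 ≤ R ∧ ∀ ε > 0, ∃ N : ℕ, ∀ n ≥ N,
    ∃ T : Matrix (Fin n → Fin d) (Fin n → Fin d) ℂ →
          Matrix (Fin ⌊(n : ℝ) * R⌋₊ → Fin 2) (Fin ⌊(n : ℝ) * R⌋₊ → Fin 2) ℂ,
      IsIncoherentOp T ∧ 1 - ε ≤ fidelity (T (tpow ρ n)) (tpow Phi2 ⌊(n : ℝ) * R⌋₊)

/-- Distillable coherence. -/
noncomputable def Cd {d : ℕ} (ρ : Matrix (Fin d) (Fin d) ℂ) : ℝ :=
  sSup {R | DistillRate ρ R}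

/-- `R` is an achievable coherence-formation rate for `ρ`. -/
def FormRate {d : ℕ} (ρ : Matrix (Fin d) (Fin d) ℂ) (R : ℝ) : Prop :=
  0 ≤ R ∧ ∀ ε > 0, ∃ N : ℕ, ∀ n ≥ N,
    ∃ T : Matrix (Fin ⌈(n : ℝ) * R⌉₊ → Fin 2) (Fin ⌈(n : ℝ) * R⌉₊ → Fin 2) ℂ →
          Matrix (Fin n → Fin d) (Fin n → Fin d) ℂ,
      IsIncoherentOp T ∧ 1 - ε ≤ fidelity (T (tpow Phi2 ⌈(n : ℝ) * R⌉₊)) (tpow ρ n)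

/-- Coherence cost. -/
noncomputable def Cc {d : ℕ} (ρ : Matrix (Fin d) (Fin d) ℂ) : ℝ :=
  sInf {R | FormRate ρ R}

/-- Sum of the `t` largest entries of the vector `p` (as a sup over size-`t` subsets). -/
noncomputable def sumTop (p : ι → ℝ) (t : ℕ) : ℝ :=
  sSup {x | ∃ A : Finset ι, A.card = t ∧ x = ∑ i ∈ A, p i}

/-- The spectrum of a Hermitian matrix (junk value `0` otherwise). -/
noncomputable def matSpectrum (A : Matrix ι ι ℂ) : ι → ℝ :=
  if h : A.IsHermitian then h.eigenvalues else 0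

/-- `A ≻ B`: the spectrum of `A` majorizes the spectrum of `B`. -/
def MajorizesMat (A B : Matrix ι ι ℂ) : Prop :=
  (∀ t : ℕ, sumTop (matSpectrum B) t ≤ sumTop (matSpectrum A) t) ∧
  ∑ i, matSpectrum A i = ∑ i, matSpectrum B i


section Aux
open Finset
variable {d : ℕ}


/-- permutation from equal multisets -/
lemma exists_perm_of_multiset_eq {f g : Fin d → ℝ}
    (h : Multiset.map f Finset.univ.val = Multiset.map g Finset.univ.val) :
    ∃ σ : Equiv.Perm (Fin d), f ∘ σ = g := by
  have key : ∀ h' : Fin d → ℝ, Multiset.map h' Finset.univ.val = ↑(List.ofFn (h' ∘ Tuple.sort h')) := by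
    intro h'
    have hσ : Multiset.map (⇑(Tuple.sort h')) Finset.univ.val = Finset.univ.val := by
      have := congrArg Finset.val (Finset.map_univ_equiv (Tuple.sort h'))
      simpa [Finset.map_val] using this
    have : Multiset.map (h' ∘ ⇑(Tuple.sort h')) Finset.univ.val = Multiset.map h' Finset.univ.val := by
      rw [← Multiset.map_map, hσ]
    rw [this.symm]
    rw [show (Finset.univ.val : Multiset (Fin d)) = ↑(List.finRange d) from rfl,
      Multiset.map_coe, ← List.ofFn_eq_map]
  have hperm : (List.ofFn (f ∘ Tuple.sort f)).Perm (List.ofFn (g ∘ Tuple.sort g)) := by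
    rw [← Multiset.coe_eq_coe, ← key f, ← key g, h]
  have hs1 : List.Pairwise (· ≤ ·) (List.ofFn (f ∘ Tuple.sort f)) :=
    (Tuple.monotone_sort f).sortedLE_ofFn.pairwise
  have hs2 : List.Pairwise (· ≤ ·) (List.ofFn (g ∘ Tuple.sort g)) :=
    (Tuple.monotone_sort g).sortedLE_ofFn.pairwise
  have heq : f ∘ Tuple.sort f = g ∘ Tuple.sort g :=
    List.ofFn_injective (List.Perm.eq_of_pairwise' hs1 hs2 hperm)
  refine ⟨(Tuple.sort g).symm.trans (Tuple.sort f), ?_⟩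
  funext i
  have := congrFun heq ((Tuple.sort g).symm i)
  simpa using this

lemma le_apply_strictMono {t d : ℕ} {g : Fin t → Fin d} (hg : StrictMono g) :
    ∀ (m : ℕ) (hm : m < t), m ≤ (g ⟨m, hm⟩ : ℕ) := by
  intro m
  induction m with
  | zero => intro _; exact Nat.zero_le _
  | succ n ih =>
    intro hm
    have h1 : (⟨n, by omega⟩ : Fin t) < ⟨n + 1, hm⟩ := by simp [Fin.lt_def]
    have h2 := hg h1
    rw [Fin.lt_def] at h2
    have := ih (by omega)
    omega

/-- sum over a finset of card t of an antitone function is at most sum over first t -/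
lemma sum_le_sum_first {d t : ℕ} {f : Fin d → ℝ} (hf : Antitone f) (ht : t ≤ d)
    (B : Finset (Fin d)) (hB : B.card = t) :
    ∑ j ∈ B, f j ≤ ∑ k : Fin t, f (Fin.castLE ht k) := by
  have hmap : B = Finset.univ.map (B.orderEmbOfFin hB).toEmbedding := by
    ext j
    simp only [Finset.mem_map, Finset.mem_univ, true_and]
    constructor
    · intro hj
      have : j ∈ Set.range (B.orderEmbOfFin hB) := by
        rw [Finset.range_orderEmbOfFin]; exact hj
      obtain ⟨k, hk⟩ := this
      exact ⟨k, hk⟩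
    · rintro ⟨k, rfl⟩; exact Finset.orderEmbOfFin_mem B hB k
  rw [hmap, Finset.sum_map]
  apply Finset.sum_le_sum
  intro k _
  apply hf
  rw [Fin.le_def]
  exact le_apply_strictMono (B.orderEmbOfFin hB).strictMono k.1 k.2

noncomputable def asort {d : ℕ} (p : Fin d → ℝ) : Equiv.Perm (Fin d) :=
  Fin.revPerm.trans (Tuple.sort p)

lemma antitone_asort {d : ℕ} (p : Fin d → ℝ) : Antitone (p ∘ asort p) := by
  intro a b hab
  have : Fin.rev b ≤ Fin.rev a := Fin.rev_le_rev.mpr hab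
  exact Tuple.monotone_sort p this

noncomputable def pext {d : ℕ} (p : Fin d → ℝ) : ℕ → ℝ :=
  fun k => if h : k < d then p (asort p ⟨k, h⟩) else 0

lemma sumTop_eq {d : ℕ} (p : Fin d → ℝ) (t : ℕ) (ht : t ≤ d) :
    sumTop p t = ∑ k ∈ Finset.range t, pext p k := by
  set S := {x | ∃ A : Finset (Fin d), A.card = t ∧ x = ∑ i ∈ A, p i} with hS
  have hfin : S.Finite := by
    have : S ⊆ (fun A : Finset (Fin d) => ∑ i ∈ A, p i) '' Set.univ := by
      rintro x ⟨A, _, rfl⟩; exact ⟨A, trivial, rfl⟩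
    exact Set.Finite.subset (Set.finite_univ.image _) this
  have hrhs : ∑ k ∈ Finset.range t, pext p k = ∑ k : Fin t, p (asort p (Fin.castLE ht k)) := by
    rw [← Fin.sum_univ_eq_sum_range]
    apply Finset.sum_congr rfl
    intro k _
    have hk : (k : ℕ) < d := lt_of_lt_of_le k.2 ht
    simp only [pext, dif_pos hk]
    rfl
  have hmem : (∑ k ∈ Finset.range t, pext p k) ∈ S := by
    refine ⟨Finset.image (fun k : Fin t => asort p (Fin.castLE ht k)) Finset.univ, ?_, ?_⟩
    · rw [Finset.card_image_of_injective _
          (fun a b hab => Fin.castLE_injective ht ((asort p).injective hab)),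
        Finset.card_univ, Fintype.card_fin]
    · rw [Finset.sum_image
        (fun a _ b _ hab => Fin.castLE_injective ht ((asort p).injective hab))]
      exact hrhs
  have hub : ∀ x ∈ S, x ≤ ∑ k ∈ Finset.range t, pext p k := by
    rintro x ⟨A, hA, rfl⟩
    have h1 : ∑ i ∈ A, p i = ∑ j ∈ A.image (asort p).symm, (p ∘ asort p) j := by
      rw [Finset.sum_image (fun a _ b _ hab => (asort p).symm.injective hab)]
      apply Finset.sum_congr rfl
      intro i _; simp
    rw [h1, hrhs]
    exact sum_le_sum_first (antitone_asort p) ht _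
      (by rw [Finset.card_image_of_injective _ (asort p).symm.injective, hA])
  apply le_antisymm
  · exact csSup_le ⟨_, hmem⟩ hub
  · exact le_csSup hfin.bddAbove hmem

lemma sumTop_comp_perm {d : ℕ} (p : Fin d → ℝ) (e : Equiv.Perm (Fin d)) (t : ℕ) :
    sumTop (p ∘ e) t = sumTop p t := by
  unfold sumTop
  congr 1
  ext x
  constructor
  · rintro ⟨A, hA, rfl⟩
    refine ⟨A.image e, by rw [Finset.card_image_of_injective _ e.injective, hA], ?_⟩
    rw [Finset.sum_image (fun a _ b _ hab => e.injective hab)]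
    rfl
  · rintro ⟨B, hB, rfl⟩
    refine ⟨B.image e.symm, by rw [Finset.card_image_of_injective _ e.symm.injective, hB], ?_⟩
    rw [Finset.sum_image (fun a _ b _ hab => e.symm.injective hab)]
    apply Finset.sum_congr rfl
    intro i _; simp

lemma abel_le (d : ℕ) (c p q : ℕ → ℝ)
    (hc : ∀ i, i + 1 < d → c (i + 1) ≤ c i)
    (hle : ∀ t, t < d → ∑ k ∈ Finset.range t, p k ≤ ∑ k ∈ Finset.range t, q k)
    (heq : ∑ k ∈ Finset.range d, p k = ∑ k ∈ Finset.range d, q k) :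
    ∑ k ∈ Finset.range d, c k * p k ≤ ∑ k ∈ Finset.range d, c k * q k := by
  have h1 := Finset.sum_range_by_parts (M := ℝ) c p d
  have h2 := Finset.sum_range_by_parts (M := ℝ) c q d
  simp only [smul_eq_mul] at h1 h2
  rw [h1, h2, heq]
  apply sub_le_sub_left
  apply Finset.sum_le_sum
  intro i hi
  rw [Finset.mem_range] at hi
  have hi1 : i + 1 < d := by omega
  exact mul_le_mul_of_nonpos_left (hle (i + 1) hi1) (by linarith [hc i hi1])

lemma rado {d : ℕ} (p q : Fin d → ℝ)
    (h1 : ∀ t : ℕ, t ≤ d → sumTop p t ≤ sumTop q t)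
    (h2 : ∑ i, p i = ∑ i, q i) :
    ∃ (m : ℕ) (lam : Fin m → ℝ) (σ : Fin m → Equiv.Perm (Fin d)),
      (∀ k, 0 ≤ lam k) ∧ (∑ k, lam k = 1) ∧ (∀ i, p i = ∑ k, lam k * q (σ k i)) := by
  classical
  set S : Set (Fin d → ℝ) := Set.range (fun σ : Equiv.Perm (Fin d) => q ∘ σ) with hSdef
  have hSfin : S.Finite := Set.finite_range _
  -- step 1 : p ∈ convexHull ℝ S
  have hp : p ∈ convexHull ℝ S := by
    by_contra hcon
    obtain ⟨f, u, hfu1, hfu2⟩ := geometric_hahn_banach_closed_point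
      (convex_convexHull ℝ S) (hSfin.isClosed_convexHull (𝕜 := ℝ)) hcon
    set c : Fin d → ℝ := fun i => f (Pi.single i 1) with hc
    have hfx : ∀ x : Fin d → ℝ, f x = ∑ i, x i * c i := by
      intro x
      conv_lhs => rw [pi_eq_sum_univ x, map_sum]
      apply Finset.sum_congr rfl
      intro i _
      rw [_root_.map_smul, smul_eq_mul]
      congr 1
      congr 1
      funext j
      simp [Pi.single_apply, eq_comm]
    set sc := asort c
    set sp := asort p
    set sq := asort q
    have hA : ∑ i, c i * p i ≤ ∑ k, (c ∘ sc) k * (p ∘ sp) k := by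
      have e1 : ∑ i, c i * p i = ∑ k, c (sc k) * p (sc k) :=
        (Equiv.sum_comp sc (fun i => c i * p i)).symm
      have e2 : ∀ k, p (sc k) = (p ∘ sp) ((sc.trans sp.symm) k) := by
        intro k; simp
      have hmono : Monovary (c ∘ sc) (p ∘ sp) := by
        intro i j hij
        rcases le_or_gt j i with h | h
        · exact antitone_asort c h
        · exact absurd hij (not_lt.mpr (antitone_asort p h.le))
      calc ∑ i, c i * p i = ∑ k, (c ∘ sc) k * (p ∘ sp) ((sc.trans sp.symm) k) := by
            rw [e1]; exact Finset.sum_congr rfl fun k _ => by rw [e2 k]; rfl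
        _ ≤ ∑ k, (c ∘ sc) k * (p ∘ sp) k := hmono.sum_mul_comp_perm_le_sum_mul
    have hB : ∑ k, (c ∘ sc) k * (p ∘ sp) k ≤ ∑ k, (c ∘ sc) k * (q ∘ sq) k := by
      set cE : ℕ → ℝ := fun k => if h : k < d then (c ∘ sc) ⟨k, h⟩ else 0 with hcE
      have key := abel_le d cE (pext p) (pext q) ?_ ?_ ?_
      · have l1 : ∑ k, (c ∘ sc) k * (p ∘ sp) k = ∑ k ∈ Finset.range d, cE k * pext p k := by
          rw [← Fin.sum_univ_eq_sum_range (fun k => cE k * pext p k) d]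
          exact Finset.sum_congr rfl fun k _ => by
            simp only [hcE, pext, dif_pos k.2]; rfl
        have l2 : ∑ k, (c ∘ sc) k * (q ∘ sq) k = ∑ k ∈ Finset.range d, cE k * pext q k := by
          rw [← Fin.sum_univ_eq_sum_range (fun k => cE k * pext q k) d]
          exact Finset.sum_congr rfl fun k _ => by
            simp only [hcE, pext, dif_pos k.2]; rfl
        rw [l1, l2]; exact key
      · intro i hi
        simp only [hcE, dif_pos (by omega : i + 1 < d), dif_pos (by omega : i < d)]
        exact antitone_asort c (by simp [Fin.le_def])
      · intro t ht
        rw [← sumTop_eq p t ht.le, ← sumTop_eq q t ht.le]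
        exact h1 t ht.le
      · rw [← Fin.sum_univ_eq_sum_range (pext p) d, ← Fin.sum_univ_eq_sum_range (pext q) d]
        have e3 : ∀ (r : Fin d → ℝ), ∑ k : Fin d, pext r (k : ℕ) = ∑ i, r i := by
          intro r
          rw [show (fun k : Fin d => pext r (k : ℕ)) = fun k : Fin d => r (asort r k) from ?_]
          · exact Equiv.sum_comp (asort r) r
          · funext k; simp only [pext, dif_pos k.2]
        rw [e3 p, e3 q, h2]
    have hC : ∑ k, (c ∘ sc) k * (q ∘ sq) k = f (q ∘ (sc.symm.trans sq)) := by
      rw [hfx]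
      rw [← Equiv.sum_comp sc (fun i => (q ∘ (sc.symm.trans sq)) i * c i)]
      apply Finset.sum_congr rfl
      intro k _
      simp [mul_comm]
    have hfp : f p = ∑ i, c i * p i := by
      rw [hfx]; exact Finset.sum_congr rfl fun i _ => mul_comm _ _
    have hmem : (q ∘ (sc.symm.trans sq)) ∈ convexHull ℝ S :=
      subset_convexHull ℝ S ⟨sc.symm.trans sq, rfl⟩
    have := hfu1 _ hmem
    rw [← hC] at this
    linarith [hA, hB, hfp ▸ hfu2]
  -- step 2 : extract convex combination
  rw [_root_.convexHull_eq] at hp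
  obtain ⟨ι', t, w, z, hw0, hw1, hzS, hcm⟩ := hp
  have hcm' : ∑ i ∈ t, w i • z i = p := by
    rw [← hcm, Finset.centerMass, hw1, inv_one, one_smul]
  set m := t.card with hm
  set e : Fin m ≃ {x // x ∈ t} := t.equivFin.symm with he
  choose σfun hσfun using fun (x : {x // x ∈ t}) => hzS x.1 x.2
  refine ⟨m, fun k => w (e k), fun k => σfun (e k), fun k => hw0 _ (e k).2, ?_, ?_⟩
  · rw [← hw1, ← Finset.sum_coe_sort t w]
    exact Equiv.sum_comp e (fun x : {x // x ∈ t} => w x.1)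
  · intro i
    have := congrFun hcm' i
    rw [← this]
    rw [Finset.sum_apply i t (fun j => w j • z j)]
    rw [← Finset.sum_coe_sort t (fun j => (w j • z j) i)]
    rw [← Equiv.sum_comp e (fun x : {x // x ∈ t} => (w x.1 • z x.1) i)]
    apply Finset.sum_congr rfl
    intro k _
    have hz : z (e k).1 = q ∘ (σfun (e k)) := (hσfun (e k)).symm
    simp [hz, mul_comm]
open Polynomial in
lemma charpoly_diagonal' (c : ι → ℂ) :
    (Matrix.diagonal c).charpoly = ∏ i, (X - C (c i)) := by
  have h : charmatrix (Matrix.diagonal c) = Matrix.diagonal (fun i => (X : ℂ[X]) - C (c i)) := by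
    ext i j
    by_cases h : i = j
    · subst h; simp [charmatrix_apply_eq]
    · simp [charmatrix_apply_ne _ _ _ h, Matrix.diagonal_apply_ne _ h]
  rw [Matrix.charpoly, h, det_diagonal]

open Polynomial in
lemma charpoly_hermitian (A : Matrix ι ι ℂ) (hA : A.IsHermitian) :
    A.charpoly = ∏ i, (X - C ((hA.eigenvalues i : ℂ))) := by
  classical
  set U : Matrix ι ι ℂ := (hA.eigenvectorUnitary : Matrix ι ι ℂ) with hU
  have hUU : U * star U = 1 := by simp [hU]
  have hUU' : star U * U = 1 := by simp [hU]
  set D : Matrix ι ι ℂ := Matrix.diagonal (RCLike.ofReal ∘ hA.eigenvalues) with hD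
  have hspec : A = U * D * star U := hA.spectral_theorem
  have h1 : (C.mapMatrix U) * (C.mapMatrix (star U)) = 1 := by
    rw [← _root_.map_mul, hUU, _root_.map_one]
  have h1' : (C.mapMatrix (star U)) * (C.mapMatrix U) = 1 := by
    rw [← _root_.map_mul, hUU', _root_.map_one]
  have hcm : charmatrix A = (C.mapMatrix U) * charmatrix D * (C.mapMatrix (star U)) := by
    rw [charmatrix, charmatrix, hspec, _root_.map_mul, _root_.map_mul]
    rw [Matrix.mul_sub, Matrix.sub_mul]
    congr 1
    have : (Matrix.scalar ι) (X : ℂ[X]) = (X : ℂ[X]) • (1 : Matrix ι ι ℂ[X]) := by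
      simp [Matrix.scalar, smul_eq_diagonal_mul]
    rw [this, Matrix.mul_smul, Matrix.mul_one, Matrix.smul_mul, h1]
  have hdet : A.charpoly = D.charpoly := by
    rw [Matrix.charpoly, Matrix.charpoly, hcm, det_mul, det_mul, mul_comm, ← mul_assoc,
      ← det_mul, h1', det_one, one_mul]
  rw [hdet, charpoly_diagonal']
  rfl

open Polynomial in
lemma eig_multiset (A : Matrix ι ι ℂ) (hA : A.IsHermitian) (c : ι → ℝ)
    (h : A = Matrix.diagonal (fun i => (c i : ℂ))) :
    Multiset.map hA.eigenvalues Finset.univ.val = Multiset.map c Finset.univ.val := by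
  have h1 : A.charpoly = ∏ i, (X - C ((c i : ℂ))) := by rw [h, charpoly_diagonal']
  have h2 := charpoly_hermitian A hA
  have h3 : (Multiset.map (fun x : ℂ => X - C x) (Multiset.map (fun i => (hA.eigenvalues i : ℂ)) Finset.univ.val)).prod
      = (Multiset.map (fun x : ℂ => X - C x) (Multiset.map (fun i => (c i : ℂ)) Finset.univ.val)).prod := by
    rw [Multiset.map_map, Multiset.map_map]
    rw [show ((Multiset.map ((fun x : ℂ => X - C x) ∘ fun i => (hA.eigenvalues i : ℂ)) Finset.univ.val)).prod = A.charpoly from (h2 ▸ rfl),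
      show ((Multiset.map ((fun x : ℂ => X - C x) ∘ fun i => (c i : ℂ)) Finset.univ.val)).prod = A.charpoly from (h1 ▸ rfl)]
  have h4 := congrArg Polynomial.roots h3
  rw [Polynomial.roots_multiset_prod_X_sub_C, Polynomial.roots_multiset_prod_X_sub_C] at h4
  have h5 : Multiset.map (Complex.ofReal) (Multiset.map hA.eigenvalues Finset.univ.val)
      = Multiset.map (Complex.ofReal) (Multiset.map c Finset.univ.val) := by
    rw [Multiset.map_map, Multiset.map_map]; exact h4
  exact Multiset.map_injective Complex.ofReal_injective h5

lemma mulVec_pureState {d : ℕ} (K : Matrix (Fin d) (Fin d) ℂ) (x : Fin d → ℂ) :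
    K * pureState x * Kᴴ = pureState (K.mulVec x) := by
  ext j j'
  simp only [Matrix.mul_apply, pureState, Matrix.of_apply, Matrix.conjTranspose_apply,
    Matrix.mulVec, dotProduct, star_sum, star_mul', Finset.sum_mul, Finset.mul_sum]
  refine Finset.sum_congr rfl fun i' _ => Finset.sum_congr rfl fun i _ => by ring

lemma normSq_eq_norm_sq (z : ℂ) : Complex.normSq z = ‖z‖ ^ 2 := by
  rw [Complex.normSq_eq_norm_sq]

end Aux
/-- If `Δ(ψ) ≻ Δ(φ)` then there is a strictly incoherent operation
transforming `φ` into `ψ`. -/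
theorem majorization_implies_strictIC {d : ℕ} (v w : Fin d → ℂ)
    (hv : IsUnitVec v) (hw : IsUnitVec w)
    (hmaj : MajorizesMat (dephase (pureState w)) (dephase (pureState v))) :
    ∃ T : Matrix (Fin d) (Fin d) ℂ → Matrix (Fin d) (Fin d) ℂ,
      IsStrictlyIncoherentOp T ∧ T (pureState v) = pureState w := by
  classical
  set p : Fin d → ℝ := fun i => ‖v i‖ ^ 2 with hpdef
  set q : Fin d → ℝ := fun i => ‖w i‖ ^ 2 with hqdef
  have hps : ∀ z : ℂ, z * star z = ((‖z‖ ^ 2 : ℝ) : ℂ) := by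
    intro z
    rw [show star z = starRingEnd ℂ z from rfl, Complex.mul_conj, normSq_eq_norm_sq]
  have hdv : dephase (pureState v) = Matrix.diagonal (fun i => ((p i : ℝ) : ℂ)) := by
    unfold dephase pureState
    exact congrArg Matrix.diagonal (funext fun i => hps (v i))
  have hdw : dephase (pureState w) = Matrix.diagonal (fun i => ((q i : ℝ) : ℂ)) := by
    unfold dephase pureState
    exact congrArg Matrix.diagonal (funext fun i => hps (w i))
  have herm : ∀ r : Fin d → ℝ, (Matrix.diagonal (fun i => ((r i : ℝ) : ℂ))).IsHermitian := by
    intro r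
    rw [Matrix.IsHermitian, Matrix.diagonal_conjTranspose]
    exact congrArg Matrix.diagonal (funext fun i => by
      simp [Complex.conj_ofReal])
  have hspec : ∀ r : Fin d → ℝ, ∃ σ : Equiv.Perm (Fin d),
      matSpectrum (Matrix.diagonal (fun i => ((r i : ℝ) : ℂ))) = r ∘ σ := by
    intro r
    unfold matSpectrum
    rw [dif_pos (herm r)]
    obtain ⟨σ, hσ⟩ := exists_perm_of_multiset_eq (eig_multiset _ (herm r) r rfl)
    refine ⟨σ.symm, funext fun i => ?_⟩
    have := congrFun hσ (σ.symm i)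
    simpa using this
  obtain ⟨σv, hσv⟩ := hspec p
  obtain ⟨σw, hσw⟩ := hspec q
  rw [← hdv] at hσv
  rw [← hdw] at hσw
  have h1 : ∀ t : ℕ, t ≤ d → sumTop p t ≤ sumTop q t := by
    intro t _
    have := hmaj.1 t
    rwa [hσv, hσw, sumTop_comp_perm, sumTop_comp_perm] at this
  have h2 : ∑ i, p i = ∑ i, q i := by
    have h := hmaj.2
    rw [hσv, hσw] at h
    have e1 : ∑ i, (p ∘ σv) i = ∑ i, p i := Equiv.sum_comp σv p
    have e2 : ∑ i, (q ∘ σw) i = ∑ i, q i := Equiv.sum_comp σw q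
    rw [e1, e2] at h
    exact h.symm
  obtain ⟨m, lam, σ, h0, hsum, hdec⟩ := rado p q h1 h2
  set ct : Fin m → Fin d → ℂ := fun t i =>
    if v i = 0 then ((Real.sqrt (lam t) : ℝ) : ℂ)
    else ((Real.sqrt (lam t) : ℝ) : ℂ) * w (σ t i) / v i with hct
  set K : Fin m → Matrix (Fin d) (Fin d) ℂ :=
    fun t => Matrix.of fun j i => if j = σ t i then ct t i else 0 with hKdef
  have hnsq : ∀ t i, Complex.normSq (ct t i) = if v i = 0 then lam t else lam t * q (σ t i) / p i := by
    intro t i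
    by_cases hv0 : v i = 0
    · simp only [hct, if_pos hv0, Complex.normSq_ofReal, Real.mul_self_sqrt (h0 t)]
    · simp only [hct, if_neg hv0]
      rw [Complex.normSq_div, Complex.normSq_mul]
      rw [Complex.normSq_ofReal, Real.mul_self_sqrt (h0 t), normSq_eq_norm_sq, normSq_eq_norm_sq]
  refine ⟨fun ρ => ∑ t, K t * ρ * (K t)ᴴ, ⟨m, K, ?_, ?_, fun ρ => rfl⟩, ?_⟩
  · -- strictly incoherent Kraus operators
    intro t
    constructor
    · intro i
      refine ⟨σ t i, fun j' hne => ?_⟩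
      by_contra hj
      exact hne (by simp [hKdef, Matrix.of_apply, if_neg hj])
    · intro i
      refine ⟨(σ t).symm i, fun j' hne => ?_⟩
      rw [Matrix.conjTranspose_apply] at hne
      by_cases hj : i = σ t j'
      · rw [Equiv.eq_symm_apply]
        exact hj.symm
      · exact absurd (by simp [hKdef, Matrix.of_apply, if_neg hj]) hne
  · -- trace preserving
    ext i i'
    rw [Matrix.sum_apply]
    have hterm : ∀ t, ((K t)ᴴ * K t) i i' =
        if i = i' then ((Complex.normSq (ct t i) : ℝ) : ℂ) else 0 := by
      intro t
      rw [Matrix.mul_apply]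
      rw [Finset.sum_eq_single (σ t i)]
      · by_cases h : i = i'
        · subst h
          rw [Matrix.conjTranspose_apply, if_pos rfl]
          have e : (K t) (σ t i) i = ct t i := by simp [hKdef, Matrix.of_apply]
          rw [e, mul_comm, show star (ct t i) = starRingEnd ℂ (ct t i) from rfl,
            Complex.mul_conj]
        · rw [Matrix.conjTranspose_apply, if_neg h]
          have e2 : (K t) (σ t i) i' = 0 := by
            rw [hKdef]
            exact if_neg (fun hc : σ t i = σ t i' => h ((σ t).injective hc))
          rw [e2, mul_zero]
      · intro b _ hb
        rw [Matrix.conjTranspose_apply]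
        simp [hKdef, Matrix.of_apply, if_neg (fun hc : b = σ t i => hb hc)]
      · intro hmem
        exact absurd (Finset.mem_univ _) hmem
    rw [Finset.sum_congr rfl (fun t _ => hterm t)]
    by_cases h : i = i'
    · subst h
      simp only [eq_self_iff_true, if_true]
      rw [Matrix.one_apply_eq]
      rw [← Complex.ofReal_sum]
      norm_cast
      by_cases hv0 : v i = 0
      · rw [Finset.sum_congr rfl (fun t _ => by rw [hnsq t i, if_pos hv0])]
        exact hsum
      · rw [Finset.sum_congr rfl (fun t _ => by rw [hnsq t i, if_neg hv0])]
        have hpi : p i ≠ 0 := by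
          simp only [hpdef]
          exact pow_ne_zero 2 (norm_ne_zero_iff.mpr hv0)
        rw [← Finset.sum_div, ← hdec i, div_self hpi]
    · simp only [if_neg h, Finset.sum_const_zero]
      rw [Matrix.one_apply_ne h]
  · -- maps pureState v to pureState w
    have hKv : ∀ t, (K t).mulVec v = fun j => ((Real.sqrt (lam t) : ℝ) : ℂ) * w j := by
      intro t
      funext j
      rw [Matrix.mulVec, dotProduct]
      have hite : ∀ i, (K t) j i * v i = if i = (σ t).symm j then ct t i * v i else 0 := by
        intro i
        by_cases h : i = (σ t).symm j
        · subst h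
          rw [if_pos rfl]
          simp [hKdef, Matrix.of_apply, Equiv.apply_symm_apply]
        · rw [if_neg h]
          have hne : j ≠ σ t i := by
            intro hc
            exact h (by rw [hc, Equiv.symm_apply_apply])
          simp [hKdef, Matrix.of_apply, if_neg hne]
      rw [Finset.sum_congr rfl (fun i _ => hite i),
        Finset.sum_ite_eq' Finset.univ ((σ t).symm j) (fun i => ct t i * v i),
        if_pos (Finset.mem_univ _)]
      set i0 := (σ t).symm j with hi0
      have hji : σ t i0 = j := Equiv.apply_symm_apply _ _
      by_cases hv0 : v i0 = 0
      · rw [hv0, mul_zero]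
        have hp0 : p i0 = 0 := by simp [hpdef, hv0]
        have hsum0 : ∑ k, lam k * q (σ k i0) = 0 := by rw [← hdec i0]; exact hp0
        have hz : lam t * q (σ t i0) = 0 := by
          have hnn : ∀ k ∈ Finset.univ, (0:ℝ) ≤ lam k * q (σ k i0) := fun k _ =>
            mul_nonneg (h0 k) (by simp only [hqdef]; positivity)
          exact (Finset.sum_eq_zero_iff_of_nonneg hnn).mp hsum0 t (Finset.mem_univ t)
        rcases mul_eq_zero.mp hz with h | h
        · rw [h, Real.sqrt_zero]
          simp
        · have hw0 : w (σ t i0) = 0 := by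
            have h2 : ‖w (σ t i0)‖ ^ 2 = 0 := h
            simpa using h2
          rw [hji] at hw0
          rw [hw0, mul_zero]
      · simp only [hct, if_neg hv0]
        rw [div_mul_cancel₀ _ hv0, hji]
    calc (∑ t, K t * pureState v * (K t)ᴴ)
        = ∑ t, pureState ((K t).mulVec v) :=
          Finset.sum_congr rfl fun t _ => mulVec_pureState _ _
      _ = ∑ t, ((lam t : ℝ) : ℂ) • pureState w := by
          refine Finset.sum_congr rfl fun t _ => ?_
          rw [hKv t]
          ext j j'
          simp only [pureState, Matrix.of_apply, Matrix.smul_apply, smul_eq_mul, star_mul',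
            Complex.star_def, Complex.conj_ofReal]
          rw [show ((Real.sqrt (lam t) : ℝ) : ℂ) * w j * (((Real.sqrt (lam t) : ℝ) : ℂ) * (starRingEnd ℂ) (w j'))
              = (((Real.sqrt (lam t) * Real.sqrt (lam t) : ℝ)) : ℂ) * (w j * (starRingEnd ℂ) (w j')) from by
            push_cast; ring]
          rw [Real.mul_self_sqrt (h0 t)]
      _ = pureState w := by
          rw [← Finset.sum_smul, ← Complex.ofReal_sum, hsum]
          norm_num

end Coherence
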